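/- The closed geodesic of direction (3,4) on the flat torus ℝ²/(6ℤ × 4ℤ) is a 1/4-geodesic: for any two parameters s, t with |s − t| ≤ L/4 = 2.5 (arc length), the torus distance between γ(s) and γ(t) equals |s − t|. -/

import Mathlib

open Real

noncomputable def pt (a b : ℝ) : EuclideanSpace ℝ (Fin 2) :=
  (WithLp.equiv 2 (Fin 2 → ℝ)).symm ![a, b]

noncomputable def torusDist (x y : EuclideanSpace ℝ (Fin 2)) : ℝ :=
  sInf {d : ℝ | ∃ a b : ℤ, d = dist x (y + pt (6 * a) (4 * b))}

noncomputable def γ (t : ℝ) : EuclideanSpace ℝ (Fin 2) :=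
  pt (3 * t / 5) (4 * t / 5)

lemma dist_eval (s t a b : ℝ) :
    dist (γ s) (γ t + pt a b)
      = Real.sqrt ((3*s/5 - (3*t/5 + a))^2 + (4*s/5 - (4*t/5 + b))^2) := by
  simp [γ, pt, EuclideanSpace.dist_eq, Fin.sum_univ_two, WithLp.equiv_symm_apply, PiLp.toLp_apply,
    Real.dist_eq, sq_abs]

lemma int_abs_le_sq (n : ℤ) : |(n:ℝ)| ≤ (n:ℝ)^2 := by
  rcases eq_or_ne n 0 with h | h
  · simp [h]
  · have h1 : (1:ℝ) ≤ |(n:ℝ)| := by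
      have := Int.one_le_abs h
      calc (1:ℝ) ≤ ((|n| : ℤ) : ℝ) := by exact_mod_cast this
        _ = |(n:ℝ)| := by push_cast; ring
    nlinarith [abs_nonneg (n:ℝ), sq_abs (n:ℝ)]

/-- The closed geodesic of direction `(3,4)` and length `L = 10` on the flat torus
`ℝ²/(6ℤ × 4ℤ)` is a `1/4`-geodesic: for any two parameters `s, t` with
`|s − t| ≤ L/4 = 5/2`, the torus distance between `γ s` and `γ t` equals `|s − t|`. -/
theorem torus_geodesic_is_quarter_geodesic :
    ∀ s t : ℝ, |s - t| ≤ 5 / 2 → torusDist (γ s) (γ t) = |s - t| := by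
  intro s t h
  set u := s - t with hu
  apply le_antisymm
  · apply csInf_le
    · refine ⟨0, ?_⟩
      rintro d ⟨a, b, rfl⟩
      exact dist_nonneg
    · refine ⟨0, 0, ?_⟩
      rw [dist_eval]
      push_cast
      rw [show (3*s/5 - (3*t/5 + 6*0))^2 + (4*s/5 - (4*t/5 + 4*0))^2 = u^2 by rw [hu]; ring]
      rw [Real.sqrt_sq_eq_abs]
  · apply le_csInf
    · exact ⟨_, 0, 0, rfl⟩
    · rintro d ⟨a, b, rfl⟩
      rw [dist_eval]
      rw [← Real.sqrt_sq_eq_abs]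
      apply Real.sqrt_le_sqrt
      have ha := int_abs_le_sq a
      have hb := int_abs_le_sq b
      have hau : (a:ℝ) * u ≤ |(a:ℝ)| * (5/2) := by
        calc (a:ℝ) * u ≤ |(a:ℝ) * u| := le_abs_self _
          _ = |(a:ℝ)| * |u| := abs_mul _ _
          _ ≤ |(a:ℝ)| * (5/2) := by
              exact mul_le_mul_of_nonneg_left h (abs_nonneg _)
      have hbu : (b:ℝ) * u ≤ |(b:ℝ)| * (5/2) := by
        calc (b:ℝ) * u ≤ |(b:ℝ) * u| := le_abs_self _
          _ = |(b:ℝ)| * |u| := abs_mul _ _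
          _ ≤ |(b:ℝ)| * (5/2) := by
              exact mul_le_mul_of_nonneg_left h (abs_nonneg _)
      have : (3*s/5 - (3*t/5 + 6*(a:ℝ)))^2 + (4*s/5 - (4*t/5 + 4*(b:ℝ)))^2
          = u^2 + 36*(a:ℝ)^2 + 16*(b:ℝ)^2 - (36*(a:ℝ) + 32*(b:ℝ)) * u / 5 := by
        rw [hu]; ring
      rw [this]
      nlinarith [ha, hb, hau, hbu, abs_nonneg (a:ℝ), abs_nonneg (b:ℝ)]
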